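/- Let U be an [n,k]_{q^m/q} system that is not 2-spannable. Then for every F_{q^m}-hyperplane H of F_{q^m}^k, dim_{F_q}(U ∩ H) ≤ n - k. -/

import Mathlib

set_option synthInstance.maxHeartbeats 1000000
set_option maxHeartbeats 1000000
open Module Submodule

variable (Fq : Type*) {L : Type*} [Field Fq] [Field L] [Algebra Fq L]

/-- The rank support of a vector `x ∈ L^n` (L = F_{q^m}, Fq = F_q): the `Fq`-span of the
rows of its coordinate matrix, equivalently the span of all `(f (x 1), …, f (x n))` for
`Fq`-linear functionals `f : L → Fq`. -/
def rsupp {n : ℕ} (x : Fin n → L) : Submodule Fq (Fin n → Fq) :=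
  Submodule.span Fq {v | ∃ f : L →ₗ[Fq] Fq, v = fun j => f (x j)}

/-- The rank (weight) of a vector. -/
noncomputable def rrk {n : ℕ} (x : Fin n → L) : ℕ :=
  Module.finrank Fq (rsupp Fq x)

/-- A linear rank-metric code is intersecting if the supports of any two nonzero
codewords meet nontrivially. -/
def RankIntersecting {n : ℕ} (C : Submodule L (Fin n → L)) : Prop :=
  ∀ c ∈ C, ∀ c' ∈ C, c ≠ 0 → c' ≠ 0 → rsupp Fq c ⊓ rsupp Fq c' ≠ ⊥

/-- A rank-metric code is nondegenerate if the supports of its codewords span `Fq^n`. -/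
def Nondeg {n : ℕ} (C : Submodule L (Fin n → L)) : Prop :=
  (⨆ c ∈ C, rsupp Fq c) = ⊤

/-- An `L`-hyperplane of `L^k`. -/
def IsHyperplane {k : ℕ} (H : Submodule L (Fin k → L)) : Prop :=
  ∃ φ : (Fin k → L) →ₗ[L] L, φ ≠ 0 ∧ H = LinearMap.ker φ

/-- A `q`-system `U` is 2-spannable if it is spanned by its intersections with two
`L`-hyperplanes. -/
def TwoSpannable {k : ℕ} (U : Submodule Fq (Fin k → L)) : Prop :=
  ∃ H₁ H₂ : Submodule L (Fin k → L), IsHyperplane H₁ ∧ IsHyperplane H₂ ∧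
    U = (U ⊓ H₁.restrictScalars Fq) ⊔ (U ⊓ H₂.restrictScalars Fq)

/-- A minimal rank-metric code. -/
def MinimalCode {n : ℕ} (C : Submodule L (Fin n → L)) : Prop :=
  ∀ c ∈ C, ∀ c' ∈ C, rsupp Fq c ≤ rsupp Fq c' → ∃ lam : L, c' = lam • c

/-- if an `[n,k]` system is not 2-spannable, every hyperplane has weight
at most `n - k`. -/
theorem stmt7 [FiniteDimensional Fq L] {k n : ℕ} (U : Submodule Fq (Fin k → L))
    (hn : finrank Fq U = n) (hspan : Submodule.span L (U : Set (Fin k → L)) = ⊤)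
    (h2 : ¬ TwoSpannable Fq U) :
    ∀ H : Submodule L (Fin k → L), IsHyperplane H →
      finrank Fq ↥(U ⊓ H.restrictScalars Fq) + k ≤ n := by
  intro H hH
  by_contra hlt
  push_neg at hlt
  set W : Submodule Fq (Fin k → L) := U ⊓ H.restrictScalars Fq with hWdef
  have hWU : W ≤ U := inf_le_left
  set W' : Submodule Fq ↥U := W.comap U.subtype with hW'
  have hWfin : finrank Fq W' = finrank Fq W :=
    (Submodule.comapSubtypeEquivOfLe hWU).finrank_eq
  obtain ⟨P, hP⟩ := W'.exists_isCompl
  have hsum : finrank Fq W' + finrank Fq P = n := by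
    rw [Submodule.finrank_add_eq_of_isCompl hP, hn]
  set d := finrank Fq P with hd
  have hdk : d < k := by
    have : finrank Fq W ≤ n := hn ▸ Submodule.finrank_mono hWU
    omega
  haveI : Module.Free Fq ↥P := Module.Free.of_divisionRing Fq ↥P
  let b : Basis (Fin d) Fq ↥P := finBasis Fq ↥P
  let f : ↥P →ₗ[Fq] (Fin k → L) := U.subtype.comp P.subtype
  let v : Fin d → (Fin k → L) := fun i => f (b i)
  have hvlt : Submodule.span L (Set.range v) < ⊤ := by
    apply lt_top_of_finrank_lt_finrank
    calc finrank L ↥(Submodule.span L (Set.range v)) ≤ Fintype.card (Fin d) :=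
          finrank_range_le_card v
      _ < finrank L (Fin k → L) := by
          rw [Fintype.card_fin, Module.finrank_pi]; simpa using hdk
  obtain ⟨φ, hφ, hφbot⟩ := Submodule.exists_dual_map_eq_bot_of_lt_top hvlt inferInstance
  have hker : Submodule.span L (Set.range v) ≤ LinearMap.ker φ := by
    intro y hy
    have hm : φ y ∈ (Submodule.span L (Set.range v)).map φ :=
      Submodule.mem_map_of_mem hy
    rw [hφbot] at hm
    simpa using hm
  apply h2
  refine ⟨H, LinearMap.ker φ, hH, ⟨φ, hφ, rfl⟩, le_antisymm ?_ (sup_le inf_le_left inf_le_left)⟩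
  intro x hx
  obtain ⟨w, hw, p, hp, hwp⟩ := Submodule.mem_sup.mp
    (show (⟨x, hx⟩ : ↥U) ∈ W' ⊔ P by rw [hP.sup_eq_top]; exact Submodule.mem_top)
  have hxeq : x = ((w : Fin k → L)) + ((p : Fin k → L)) := by
    have := congrArg (Subtype.val) hwp
    exact this.symm
  rw [hxeq]
  refine Submodule.add_mem _ (Submodule.mem_sup_left hw) (Submodule.mem_sup_right ?_)
  refine ⟨p.2, ?_⟩
  have hp1 : (p : Fin k → L) ∈ Submodule.span Fq (Set.range v) := by
    have hmem : (⟨p, hp⟩ : ↥P) ∈ Submodule.span Fq (Set.range b) := Basis.mem_span b _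
    have h3 := Submodule.mem_map_of_mem (f := f) hmem
    rw [Submodule.map_span, ← Set.range_comp] at h3
    exact h3
  exact hker (Submodule.span_le_restrictScalars Fq L _ hp1)
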